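/- Let $(\Omega, \mathcal{F}, \mathbb{P})$ be a probability space, $Z_1, \dots, Z_n$ i.i.d. random variables with values in a measurable space $(\mathcal{T}, \mathcal{B})$, and define the empirical process $X_A = \sum_{j=1}^n \mathbf{1}_{\{Z_j \in A\}}$ for measurable $A$. Specialize to $\mathcal{T} = [0,1]^2$, $n = 1$, and the indexing collection $\mathcal{A} = \{[0,t] : t \in [0,1]^2\}$. Exhibit an increment $C = A \setminus B$ with $B = A_1 \cup A_2 \subseteq A$ such that $\mathbb{E}[X_A \mid \mathcal{G}^*_C] \ne \mathbb{E}[X_A \mid X_{A_1}, X_{A_2}, X_{A_1 \cap A_2}]$ with positive probability: i.e., the empirical process is not $\mathcal{C}$-Markov (not $\ast$-Markov). -/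

import Mathlib

open MeasureTheory ProbabilityTheory

/-- The empirical set-indexed process attached to a random point `Z`. -/
noncomputable def empProc {Ω : Type*} (Z : Ω → ℝ × ℝ) (A : Set (ℝ × ℝ)) (ω : Ω) : ℝ :=
  open scoped Classical in
  if Z ω ∈ A then 1 else 0

/-- Strong history `𝒢*_C` for the increment `C = A \ (A₁ ∪ A₂)` of the empirical
process: generated by the values on rectangles `[0,u]` disjoint from `C`. -/
noncomputable def empHist {Ω : Type*} (Z : Ω → ℝ × ℝ) (a b c : ℝ × ℝ) :
    MeasurableSpace Ω :=
  ⨆ (u : ℝ × ℝ)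
    (_ : Set.Icc 0 u ∩ (Set.Icc 0 a \ (Set.Icc 0 b ∪ Set.Icc 0 c)) = ∅),
    MeasurableSpace.comap (empProc Z (Set.Icc 0 u)) inferInstance

lemma empProc_eq_indicator {Ω : Type*} (Z : Ω → ℝ × ℝ) (A : Set (ℝ × ℝ)) :
    empProc Z A = (Z ⁻¹' A).indicator (fun _ => (1:ℝ)) := by
  classical
  funext ω
  simp [empProc, Set.indicator_apply]

lemma empProc_measurable {Ω : Type*} {m0 : MeasurableSpace Ω} {Z : Ω → ℝ × ℝ}
    (hZ : Measurable Z) {A : Set (ℝ × ℝ)} (hA : MeasurableSet A) :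
    Measurable (empProc Z A) := by
  rw [empProc_eq_indicator]
  exact measurable_const.indicator (hZ hA)

lemma empProc_preimage_one {Ω : Type*} (Z : Ω → ℝ × ℝ) (A : Set (ℝ × ℝ)) :
    empProc Z A ⁻¹' {1} = Z ⁻¹' A := by
  classical
  ext ω
  by_cases h : Z ω ∈ A <;> simp [empProc, h]

lemma empProc_nonneg {Ω : Type*} (Z : Ω → ℝ × ℝ) (A : Set (ℝ × ℝ)) (ω : Ω) :
    0 ≤ empProc Z A ω := by
  classical
  unfold empProc
  split <;> norm_num

lemma empProc_eq_zero_iff {Ω : Type*} (Z : Ω → ℝ × ℝ) (A : Set (ℝ × ℝ)) (ω : Ω) :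
    empProc Z A ω = 0 ↔ Z ω ∉ A := by
  classical
  by_cases h : Z ω ∈ A <;> simp [empProc, h]

lemma diff_Icc_eq :
    Set.Icc (0:ℝ×ℝ) (1, 1/4) \ Set.Icc (0:ℝ×ℝ) (1/2, 1/4)
      = Set.Ioc (1/2:ℝ) 1 ×ˢ Set.Icc (0:ℝ) (1/4) := by
  ext ⟨x, y⟩
  simp only [Set.mem_diff, Set.mem_Icc, Set.mem_prod, Set.mem_Ioc, Prod.le_def,
    Prod.fst_zero, Prod.snd_zero, not_and, not_le]
  constructor
  · rintro ⟨⟨⟨h0x, h0y⟩, hx1, hy⟩, h⟩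
    refine ⟨⟨?_, hx1⟩, h0y, hy⟩
    by_contra hc
    push_neg at hc
    have := h ⟨h0x, h0y⟩ hc
    linarith
  · rintro ⟨⟨hx2, hx1⟩, h0y, hy⟩
    exact ⟨⟨⟨by linarith, h0y⟩, hx1, hy⟩, fun _ hx12 => by linarith⟩

lemma inter_Icc_eq :
    Set.Icc (0:ℝ×ℝ) (1/2, 1/2) ∩
        (Set.Icc (0:ℝ×ℝ) (1/2, 1/4) ∪ Set.Icc (0:ℝ×ℝ) (1/4, 1/2))ᶜ
      = Set.Ioc (1/4:ℝ) (1/2) ×ˢ Set.Ioc (1/4:ℝ) (1/2) := by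
  ext ⟨x, y⟩
  simp only [Set.mem_inter_iff, Set.mem_compl_iff, Set.mem_union, Set.mem_Icc, Set.mem_prod,
    Set.mem_Ioc, Prod.le_def, Prod.fst_zero, Prod.snd_zero, not_or, not_and, not_le]
  constructor
  · rintro ⟨⟨⟨h0x, h0y⟩, hx, hy⟩, hb, hc⟩
    refine ⟨⟨?_, hx⟩, ?_, hy⟩
    · by_contra hcon; push_neg at hcon
      have := hc ⟨h0x, h0y⟩ hcon; linarith
    · by_contra hcon; push_neg at hcon
      have := hb ⟨h0x, h0y⟩ hx; linarith
  · rintro ⟨⟨hx4, hx⟩, hy4, hy⟩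
    exact ⟨⟨⟨by linarith, by linarith⟩, hx, hy⟩,
      fun _ _ => by linarith, fun _ _ => by linarith⟩

/-- The empirical process of a single uniform point on `[0,1]²`, indexed by rectangles
`[0,t]`, is **not** `𝒞`-Markov: there is an increment `C = [0,a] \ ([0,b] ∪ [0,c])` with
`[0,b] ∪ [0,c] ⊆ [0,a]` for which
`𝔼[X_A | 𝒢*_C] ≠ 𝔼[X_A | X_{[0,b]}, X_{[0,c]}, X_{[0,b∧c]}]` with positive
probability. -/
theorem empirical_not_cMarkov
    {Ω : Type*} {m0 : MeasurableSpace Ω} (μ : Measure Ω) [IsProbabilityMeasure μ]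
    (Z : Ω → ℝ × ℝ) (hZmeas : Measurable Z)
    (hZunif : Measure.map Z μ =
      (volume : Measure (ℝ × ℝ)).restrict (Set.Icc (0 : ℝ) 1 ×ˢ Set.Icc (0 : ℝ) 1)) :
    ∃ a b c : ℝ × ℝ,
      a ∈ Set.Icc (0 : ℝ × ℝ) 1 ∧ b ∈ Set.Icc (0 : ℝ × ℝ) 1 ∧
      c ∈ Set.Icc (0 : ℝ × ℝ) 1 ∧
      Set.Icc 0 b ∪ Set.Icc 0 c ⊆ Set.Icc 0 a ∧
      ¬ (μ[empProc Z (Set.Icc 0 a) | empHist Z a b c] =ᵐ[μ]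
          μ[empProc Z (Set.Icc 0 a) |
            MeasurableSpace.comap (fun ω =>
              (empProc Z (Set.Icc 0 b) ω, empProc Z (Set.Icc 0 c) ω,
                empProc Z (Set.Icc 0 (b ⊓ c)) ω)) inferInstance]) := by
  classical
  refine ⟨(1/2, 1/2), (1/2, 1/4), (1/4, 1/2), ?_, ?_, ?_, ?_, ?_⟩
  · constructor <;> simp [Prod.le_def] <;> norm_num
  · constructor <;> simp [Prod.le_def] <;> norm_num
  · constructor <;> simp [Prod.le_def] <;> norm_num
  · exact Set.union_subset
      (Set.Icc_subset_Icc le_rfl (by simp [Prod.le_def]; norm_num))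
      (Set.Icc_subset_Icc le_rfl (by simp [Prod.le_def]; norm_num))
  · intro h
    -- notation
    set a : ℝ × ℝ := (1/2, 1/2) with ha
    set b : ℝ × ℝ := (1/2, 1/4) with hb
    set c : ℝ × ℝ := (1/4, 1/2) with hc
    set Xa : Ω → ℝ := empProc Z (Set.Icc 0 a) with hXa
    set trip : Ω → ℝ × ℝ × ℝ := fun ω =>
      (empProc Z (Set.Icc 0 b) ω, empProc Z (Set.Icc 0 c) ω,
        empProc Z (Set.Icc 0 (b ⊓ c)) ω) with htrip
    have hXaInt : Integrable Xa μ := by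
      rw [hXa, empProc_eq_indicator]
      exact (integrable_const (1:ℝ)).indicator (hZmeas measurableSet_Icc)
    have hmGle : empHist Z a b c ≤ m0 := by
      rw [empHist]
      exact iSup₂_le fun u _ =>
        measurable_iff_comap_le.mp (empProc_measurable hZmeas measurableSet_Icc)
    have htripMeas : Measurable trip :=
      (empProc_measurable hZmeas measurableSet_Icc).prodMk
        ((empProc_measurable hZmeas measurableSet_Icc).prodMk
          (empProc_measurable hZmeas measurableSet_Icc))
    have hm2le : MeasurableSpace.comap trip inferInstance ≤ m0 :=
      measurable_iff_comap_le.mp htripMeas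
    -- the event G
    set SG : Set (ℝ × ℝ) := Set.Ioc (1/2:ℝ) 1 ×ˢ Set.Icc (0:ℝ) (1/4) with hSG
    have hSGmeas : MeasurableSet SG := measurableSet_Ioc.prod measurableSet_Icc
    set G : Set Ω := Z ⁻¹' SG with hG
    have hGmeas : MeasurableSet G := hZmeas hSGmeas
    -- G is measurable for the strong history
    have hGmG : MeasurableSet[empHist Z a b c] G := by
      have hdisj : ∀ u : ℝ × ℝ, u.2 = 1/4 →
          Set.Icc 0 u ∩ (Set.Icc 0 a \ (Set.Icc 0 b ∪ Set.Icc 0 c)) = ∅ := by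
        intro u hu
        rw [Set.eq_empty_iff_forall_notMem]
        rintro p ⟨⟨hp0, hpu⟩, ⟨hp0', hpa⟩, hpn⟩
        exact hpn (Or.inl ⟨hp0, hpa.1, le_trans hpu.2 (by rw [hu, hb])⟩)
      have key : ∀ u : ℝ × ℝ, u.2 = 1/4 →
          MeasurableSet[empHist Z a b c] (Z ⁻¹' Set.Icc 0 u) := by
        intro u hu
        have hle : MeasurableSpace.comap (empProc Z (Set.Icc 0 u)) inferInstance ≤
            empHist Z a b c := by
          rw [empHist]
          exact le_iSup₂ (f := fun (u : ℝ × ℝ)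
            (_ : Set.Icc 0 u ∩ (Set.Icc 0 a \ (Set.Icc 0 b ∪ Set.Icc 0 c)) = ∅) =>
            MeasurableSpace.comap (empProc Z (Set.Icc 0 u)) inferInstance) u (hdisj u hu)
        exact hle _ ⟨{1}, measurableSet_singleton _, empProc_preimage_one _ _⟩
      have hGeq : G = Z ⁻¹' Set.Icc 0 (1, 1/4) \ Z ⁻¹' Set.Icc 0 (1/2, 1/4) := by
        rw [hG, ← Set.preimage_diff, diff_Icc_eq]
      rw [hGeq]
      exact (key (1, 1/4) rfl).diff (key (1/2, 1/4) rfl)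
    -- G has positive probability
    have hSGsub : SG ⊆ Set.Icc (0:ℝ) 1 ×ˢ Set.Icc (0:ℝ) 1 := by
      rintro ⟨x, y⟩ ⟨⟨hx1, hx2⟩, hy1, hy2⟩
      exact ⟨⟨by linarith, hx2⟩, hy1, by linarith⟩
    have hμG : μ G ≠ 0 := by
      have : μ G = volume SG := by
        rw [hG, ← Measure.map_apply hZmeas hSGmeas, hZunif,
          Measure.restrict_apply hSGmeas, Set.inter_eq_left.mpr hSGsub]
      rw [this, hSG, Measure.volume_eq_prod, Measure.prod_prod, Real.volume_Ioc,
        Real.volume_Icc]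
      simp only [ne_eq, mul_eq_zero, ENNReal.ofReal_eq_zero, not_or, not_le]
      constructor <;> norm_num
    -- the conditional expectations
    set f : Ω → ℝ := μ[Xa | empHist Z a b c] with hf
    set g : Ω → ℝ := μ[Xa | MeasurableSpace.comap trip inferInstance] with hg
    -- f vanishes a.e. on G
    have hXaG : ∀ ω ∈ G, Xa ω = 0 := by
      intro ω hω
      rw [hXa, empProc_eq_zero_iff]
      rintro ⟨hp0, hpa⟩
      have h1 : (1/2:ℝ) < (Z ω).1 := hω.1.1
      have h2 : (Z ω).1 ≤ 1/2 := hpa.1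
      linarith
    have hintfG : ∫ x in G, f x ∂μ = 0 := by
      rw [hf, setIntegral_condExp hmGle hXaInt hGmG]
      exact setIntegral_eq_zero_of_forall_eq_zero hXaG
    have hfpos : 0 ≤ᵐ[μ.restrict G] f :=
      ae_restrict_of_ae (condExp_nonneg (Filter.Eventually.of_forall
        (fun ω => empProc_nonneg Z _ ω)))
    have hf0G : f =ᵐ[μ.restrict G] 0 :=
      (setIntegral_eq_zero_iff_of_nonneg_ae hfpos integrable_condExp.integrableOn).mp hintfG
    have hg0G : g =ᵐ[μ.restrict G] 0 :=
      Filter.EventuallyEq.trans (ae_restrict_of_ae h.symm) hf0G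
    -- pick a point of G where g vanishes
    have hrestr_ne : μ.restrict G ≠ 0 := by
      intro hcon
      have : μ G = 0 := by
        rw [← Measure.restrict_apply_univ, hcon]; simp
      exact hμG this
    haveI : (ae (μ.restrict G)).NeBot := ae_neBot.mpr hrestr_ne
    obtain ⟨ω₀, hω₀G, hgω₀⟩ :=
      ((ae_restrict_mem hGmeas).and hg0G).exists
    -- the atom D of m2
    set D : Set Ω := trip ⁻¹' {((0:ℝ), (0:ℝ), (0:ℝ))} with hD
    have hDm2 : MeasurableSet[MeasurableSpace.comap trip inferInstance] D := ⟨_, measurableSet_singleton _, rfl⟩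
    have hGD : G ⊆ D := by
      intro ω hω
      have hx : (1/2:ℝ) < (Z ω).1 := hω.1.1
      have hnb : Z ω ∉ Set.Icc 0 b := by
        rintro ⟨h1, h2⟩
        have := h2.1; rw [hb] at this; simp at this; linarith
      have hnc : Z ω ∉ Set.Icc 0 c := by
        rintro ⟨h1, h2⟩
        have := h2.1; rw [hc] at this; simp at this; linarith
      have hnbc : Z ω ∉ Set.Icc 0 (b ⊓ c) :=
        fun hmem => hnb (Set.Icc_subset_Icc le_rfl inf_le_left hmem)
      rw [hD]
      simp only [Set.mem_preimage, Set.mem_singleton_iff, htrip, Prod.mk.injEq]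
      exact ⟨(empProc_eq_zero_iff _ _ _).mpr hnb, (empProc_eq_zero_iff _ _ _).mpr hnc,
        (empProc_eq_zero_iff _ _ _).mpr hnbc⟩
    -- g is constant on D
    have hgMeas : Measurable[MeasurableSpace.comap trip inferInstance] g := stronglyMeasurable_condExp.measurable
    have hgD : ∀ ω ∈ D, g ω = 0 := by
      intro ω hω
      obtain ⟨t, ht, hts⟩ := hgMeas (measurableSet_singleton (g ω₀))
      have hω₀mem : ω₀ ∈ trip ⁻¹' t := by
        rw [hts]; exact rfl
      have htripeq : trip ω = trip ω₀ := by
        have hω' := hω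
        rw [hD] at hω'
        have h1 : trip ω = ((0:ℝ), (0:ℝ), (0:ℝ)) := hω'
        have hω₀' := hGD hω₀G
        rw [hD] at hω₀'
        have h2 : trip ω₀ = ((0:ℝ), (0:ℝ), (0:ℝ)) := hω₀'
        rw [h1, h2]
      have : ω ∈ trip ⁻¹' t := by
        simp only [Set.mem_preimage, htripeq]
        exact hω₀mem
      rw [hts] at this
      rw [Set.mem_preimage, Set.mem_singleton_iff] at this
      rw [this]
      simpa using hgω₀
    -- integral of g over D vanishes …
    have hintgD : ∫ x in D, g x ∂μ = 0 := setIntegral_eq_zero_of_forall_eq_zero hgD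
    -- … but it equals μ(Z ∈ C) > 0
    have hDXa : ∫ x in D, Xa x ∂μ = ∫ x in D, g x ∂μ :=
      (setIntegral_condExp hm2le hXaInt hDm2).symm
    -- compute ∫ x in D, Xa
    set SC : Set (ℝ × ℝ) := Set.Ioc (1/4:ℝ) (1/2) ×ˢ Set.Ioc (1/4:ℝ) (1/2) with hSC
    have hSCmeas : MeasurableSet SC := measurableSet_Ioc.prod measurableSet_Ioc
    have hDA : D ∩ Z ⁻¹' Set.Icc 0 a = Z ⁻¹' SC := by
      ext ω
      simp only [Set.mem_inter_iff, hD, Set.mem_preimage, Set.mem_singleton_iff,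
        htrip, Prod.mk.injEq, empProc_eq_zero_iff]
      constructor
      · rintro ⟨⟨hnb, hnc, _⟩, hA⟩
        have : Z ω ∈ Set.Icc (0:ℝ×ℝ) (1/2, 1/2) ∩
            (Set.Icc (0:ℝ×ℝ) (1/2, 1/4) ∪ Set.Icc (0:ℝ×ℝ) (1/4, 1/2))ᶜ := by
          refine ⟨hA, ?_⟩
          rw [Set.mem_compl_iff, Set.mem_union]
          rintro (h1 | h1)
          · exact hnb h1
          · exact hnc h1
        rw [inter_Icc_eq] at this
        exact this
      · intro hmem
        have hmem' : Z ω ∈ Set.Icc (0:ℝ×ℝ) (1/2, 1/2) ∩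
            (Set.Icc (0:ℝ×ℝ) (1/2, 1/4) ∪ Set.Icc (0:ℝ×ℝ) (1/4, 1/2))ᶜ := by
          rw [inter_Icc_eq]; exact hmem
        obtain ⟨hA, hcomp⟩ := hmem'
        rw [Set.mem_compl_iff, Set.mem_union, not_or] at hcomp
        refine ⟨⟨hcomp.1, hcomp.2, ?_⟩, hA⟩
        exact fun hm => hcomp.1 (Set.Icc_subset_Icc le_rfl inf_le_left hm)
    have hintXaD : ∫ x in D, Xa x ∂μ = (μ (Z ⁻¹' SC)).toReal := by
      rw [hXa, empProc_eq_indicator]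
      rw [setIntegral_indicator (hZmeas measurableSet_Icc)]
      rw [setIntegral_const, hDA]
      simp
      rfl
    have hμSC : μ (Z ⁻¹' SC) = volume SC := by
      rw [← Measure.map_apply hZmeas hSCmeas, hZunif, Measure.restrict_apply hSCmeas,
        Set.inter_eq_left.mpr ?_]
      rintro ⟨x, y⟩ ⟨⟨hx1, hx2⟩, hy1, hy2⟩
      exact ⟨⟨by linarith, by linarith⟩, by linarith, by linarith⟩
    have hvolSC : volume SC ≠ 0 := by
      rw [hSC, Measure.volume_eq_prod, Measure.prod_prod, Real.volume_Ioc]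
      simp only [ne_eq, mul_eq_zero, ENNReal.ofReal_eq_zero, not_or, not_le]
      constructor <;> norm_num
    have hpos : 0 < ∫ x in D, Xa x ∂μ := by
      rw [hintXaD]
      apply ENNReal.toReal_pos
      · rw [hμSC]; exact hvolSC
      · exact measure_ne_top μ _
    rw [hDXa, hintgD] at hpos
    exact lt_irrefl _ hpos
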